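/- The maps I ↦ Iβ_ℓ (the set of suffix-minimal elements of I) and S ↦ A*S are mutually inverse order isomorphisms between the set of (two-sided) ideals of A* ordered by inclusion and the set of semaphore codes on A ordered by S ≤ S' iff A*S ⊆ A*S'. -/
import Mathlib


/-- A suffix code: an antichain with respect to the suffix order. -/
def SuffixCode {A : Type*} (S : Set (List A)) : Prop :=
  ∀ u ∈ S, ∀ v ∈ S, u <:+ v → u = v

/-- A semaphore code: a suffix code `S` with `S A ⊆ A* S`. -/
def IsSemaphore {A : Type*} (S : Set (List A)) : Prop :=
  SuffixCode S ∧ ∀ s ∈ S, ∀ a : A, ∃ t ∈ S, t <:+ s ++ [a]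

/-- A (two-sided) ideal of `A*` (possibly empty). -/
def IsIdeal {A : Type*} (I : Set (List A)) : Prop :=
  ∀ u v w : List A, w ∈ I → u ++ w ++ v ∈ I

/-- `I βℓ`: the suffix-minimal elements of `I`. -/
def suffMin {A : Type*} (I : Set (List A)) : Set (List A) :=
  {w ∈ I | ∀ v ∈ I, v <:+ w → v = w}

/-- `A* S`. -/
def starMul {A : Type*} (S : Set (List A)) : Set (List A) :=
  {w | ∃ u : List A, ∃ s ∈ S, w = u ++ s}

/-- Every element of a set has a suffix-minimal suffix in the set. -/
lemma exists_suffMin_suffix_aux {A : Type*} (I : Set (List A)) :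
    ∀ n : ℕ, ∀ w : List A, w.length ≤ n → w ∈ I → ∃ s ∈ suffMin I, s <:+ w := by
  intro n
  induction n with
  | zero =>
    intro w hl hw
    refine ⟨w, ⟨hw, fun v _ hs => ?_⟩, List.suffix_refl w⟩
    exact List.IsSuffix.eq_of_length hs (le_antisymm hs.length_le (by omega))
  | succ n ih =>
    intro w hl hw
    by_cases h : w ∈ suffMin I
    · exact ⟨w, h, List.suffix_refl w⟩
    · have : ∃ v ∈ I, v <:+ w ∧ v ≠ w := by
        by_contra hc
        push_neg at hc
        exact h ⟨hw, fun v hv hs => hc v hv hs⟩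
      obtain ⟨v, hv, hvw, hne⟩ := this
      have hlt : v.length < w.length :=
        lt_of_le_of_ne hvw.length_le (fun he => hne (List.IsSuffix.eq_of_length hvw he))
      obtain ⟨s, hs, hsv⟩ := ih v (by omega) hv
      exact ⟨s, hs, hsv.trans hvw⟩

lemma exists_suffMin_suffix {A : Type*} (I : Set (List A)) :
    ∀ w ∈ I, ∃ s ∈ suffMin I, s <:+ w := fun w hw =>
  exists_suffMin_suffix_aux I w.length w le_rfl hw

lemma starMul_mem_append {A : Type*} {S : Set (List A)} (hS : IsSemaphore S) :
    ∀ w ∈ starMul S, ∀ v : List A, w ++ v ∈ starMul S := by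
  intro w hw v
  induction v generalizing w with
  | nil => simpa using hw
  | cons a v ih =>
    have h1 : w ++ [a] ∈ starMul S := by
      obtain ⟨u, s, hs, rfl⟩ := hw
      obtain ⟨t, ht, u', hu'⟩ := hS.2 s hs a
      exact ⟨u ++ u', t, ht, by rw [List.append_assoc, ← hu', List.append_assoc]⟩
    have := ih _ h1
    simpa [List.append_assoc] using this

theorem ideal_semaphore_order_iso {A : Type*} [Fintype A] [Nonempty A] :
    (∀ I : Set (List A), IsIdeal I → IsSemaphore (suffMin I) ∧ starMul (suffMin I) = I) ∧
    (∀ S : Set (List A), IsSemaphore S → IsIdeal (starMul S) ∧ suffMin (starMul S) = S) ∧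
    (∀ I J : Set (List A), IsIdeal I → IsIdeal J →
      (I ⊆ J ↔ starMul (suffMin I) ⊆ starMul (suffMin J))) := by
  have part1 : ∀ I : Set (List A), IsIdeal I →
      IsSemaphore (suffMin I) ∧ starMul (suffMin I) = I := by
    intro I hI
    constructor
    · constructor
      · intro u hu v hv huv
        exact hv.2 u hu.1 huv
      · intro s hs a
        have : s ++ [a] ∈ I := by
          have := hI [] [a] s hs.1
          simpa using this
        obtain ⟨t, ht, hts⟩ := exists_suffMin_suffix I _ this
        exact ⟨t, ht, hts⟩
    · ext w
      constructor
      · rintro ⟨u, s, hs, rfl⟩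
        have := hI u [] s hs.1
        simpa using this
      · intro hw
        obtain ⟨s, hs, u, rfl⟩ := exists_suffMin_suffix I w hw
        exact ⟨u, s, hs, rfl⟩
  have part2 : ∀ S : Set (List A), IsSemaphore S →
      IsIdeal (starMul S) ∧ suffMin (starMul S) = S := by
    intro S hS
    constructor
    · intro u v w hw
      obtain ⟨u', s, hs, rfl⟩ := hw
      have h1 : (u ++ u') ++ s ∈ starMul S := ⟨u ++ u', s, hs, rfl⟩
      have := starMul_mem_append hS _ h1 v
      simpa [List.append_assoc] using this
    · ext w
      constructor
      · rintro ⟨⟨u, s, hs, rfl⟩, hmin⟩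
        have hss : s ∈ starMul S := ⟨[], s, hs, rfl⟩
        have : s = u ++ s := hmin s hss ⟨u, rfl⟩
        rw [← this]; exact hs
      · intro hw
        refine ⟨⟨[], w, hw, rfl⟩, ?_⟩
        rintro v ⟨u, t, ht, rfl⟩ hsuf
        have htw : t <:+ w := (List.suffix_append u t).trans hsuf
        have : t = w := hS.1 t ht w hw htw
        subst this
        exact List.IsSuffix.eq_of_length hsuf
          (le_antisymm hsuf.length_le (by simp))
  refine ⟨part1, part2, ?_⟩
  intro I J hI hJ
  rw [(part1 I hI).2, (part1 J hJ).2]
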